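/- Two 2D lattices A and B with invertible structure matrices A, B ∈ GL(2,ℝ) have a full-rank common sublattice (coincident site lattice) if and only if the transition matrix T = A⁻¹B has all rational entries. -/

import Mathlib

/-- The lattice generated by a 2×2 real structure matrix `M`: the set `{M z : z ∈ ℤ²}`. -/
def latt (M : Matrix (Fin 2) (Fin 2) ℝ) : Set (Fin 2 → ℝ) :=
  {v | ∃ z : Fin 2 → ℤ, v = M.mulVec (fun i => (z i : ℝ))}

/-- A set of vectors in ℝ² is full rank if it contains two linearly independent vectors. -/
def FullRankSet (S : Set (Fin 2 → ℝ)) : Prop :=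
  ∃ v ∈ S, ∃ w ∈ S, LinearIndependent ℝ ![v, w]

/-- A matrix is rational if all its entries are rational numbers. -/
def IsRatMat (T : Matrix (Fin 2) (Fin 2) ℝ) : Prop :=
  ∀ i j, ∃ q : ℚ, T i j = (q : ℝ)

lemma den_dvd_int_mul (q : ℚ) (n : ℕ) (h : q.den ∣ n) : ∃ m : ℤ, (n : ℚ) * q = (m : ℚ) := by
  obtain ⟨k, hk⟩ := h
  refine ⟨k * q.num, ?_⟩
  have hd : (q.den : ℚ) ≠ 0 := by exact_mod_cast q.den_nz
  have h1 : (q.den : ℚ) * q = (q.num : ℚ) := by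
    rw [mul_comm, ← eq_div_iff hd]
    exact (Rat.num_div_den q).symm
  rw [hk]
  push_cast
  rw [mul_comm ((q.den : ℚ)) ((k : ℚ)), mul_assoc, h1]

/-- Two 2D lattices have a full-rank coincident site lattice iff the transition
matrix `T = A⁻¹B` is rational. -/
theorem csl_exists_iff_rational_transition
    (A B : Matrix (Fin 2) (Fin 2) ℝ) (hA : IsUnit A.det) (hB : IsUnit B.det) :
    FullRankSet (latt A ∩ latt B) ↔ IsRatMat (A⁻¹ * B) := by
  set T := A⁻¹ * B with hT
  have φdef : ∀ M : Matrix (Fin 2) (Fin 2) ℚ, M.map (Rat.castHom ℝ) = fun i j => ((M i j : ℚ) : ℝ) := fun M => rfl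
  constructor
  · rintro ⟨v, ⟨⟨a1, hva⟩, ⟨b1, hvb⟩⟩, w, ⟨⟨a2, hwa⟩, ⟨b2, hwb⟩⟩, hli⟩
    set a : Fin 2 → Fin 2 → ℤ := ![a1, a2] with ha
    set b : Fin 2 → Fin 2 → ℤ := ![b1, b2] with hb
    set Cq : Matrix (Fin 2) (Fin 2) ℚ := fun i j => ((b j i : ℤ) : ℚ) with hCq
    set Dq : Matrix (Fin 2) (Fin 2) ℚ := fun i j => ((a j i : ℤ) : ℚ) with hDq
    have hAB : ∀ j, A.mulVec (fun k => ((a j k : ℤ) : ℝ)) = B.mulVec (fun k => ((b j k : ℤ) : ℝ)) := by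
      intro j
      fin_cases j
      · simpa [ha, hb] using hva.symm.trans hvb
      · simpa [ha, hb] using hwa.symm.trans hwb
    have key : ∀ j, T.mulVec (fun k => ((b j k : ℤ) : ℝ)) = fun k => ((a j k : ℤ) : ℝ) := by
      intro j
      rw [hT, ← Matrix.mulVec_mulVec, ← hAB j, Matrix.mulVec_mulVec,
        Matrix.nonsing_inv_mul A hA, Matrix.one_mulVec]
    have hTC : T * Cq.map (Rat.castHom ℝ) = Dq.map (Rat.castHom ℝ) := by
      ext i j
      have := congrFun (key j) i
      simpa [Matrix.mul_apply, Matrix.mulVec, dotProduct, Matrix.map_apply, Matrix.map, Matrix.of_apply, hCq, hDq] using this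
    -- linear independence of the columns of Cq.map
    have hcols : LinearIndependent ℝ (fun j => ((Cq.map (Rat.castHom ℝ)).transpose j)) := by
      have hcomp : ![v, w] = (Matrix.mulVecLin B) ∘ (fun j k => ((b j k : ℤ) : ℝ)) := by
        funext j
        fin_cases j
        · simpa [hb] using hvb
        · simpa [hb] using hwb
      have : LinearIndependent ℝ (fun j k => ((b j k : ℤ) : ℝ)) := by
        apply LinearIndependent.of_comp (Matrix.mulVecLin B)
        rw [← hcomp]; exact hli
      have heq : (fun j => ((Cq.map (Rat.castHom ℝ)).transpose j))
          = (fun j k => ((b j k : ℤ) : ℝ)) := by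
        funext j k
        simp [Matrix.transpose_apply, Matrix.map_apply, Matrix.map, Matrix.of_apply, hCq]
      rw [heq]
      exact this
    have hCu : IsUnit (Cq.map (Rat.castHom ℝ)).det :=
      (Matrix.isUnit_iff_isUnit_det _).mp (Matrix.linearIndependent_cols_iff_isUnit.mp hcols)
    have hdet : (Cq.map (Rat.castHom ℝ)).det = ((Cq.det : ℚ) : ℝ) :=
      (RingHom.map_det (Rat.castHom ℝ) Cq).symm
    have hCqu : IsUnit Cq.det := by
      rw [isUnit_iff_ne_zero]
      intro h0
      rw [hdet, h0] at hCu
      simp at hCu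
    have hinv : Cq.map (Rat.castHom ℝ) * (Cq⁻¹).map (Rat.castHom ℝ) = 1 := by
      rw [← Matrix.map_mul, Matrix.mul_nonsing_inv Cq hCqu]
      simp
    have hTeq : T = (Dq * Cq⁻¹).map (Rat.castHom ℝ) := by
      calc T = T * 1 := by rw [mul_one]
        _ = T * (Cq.map (Rat.castHom ℝ) * (Cq⁻¹).map (Rat.castHom ℝ)) := by rw [hinv]
        _ = (T * Cq.map (Rat.castHom ℝ)) * (Cq⁻¹).map (Rat.castHom ℝ) := (mul_assoc T _ _).symm
        _ = Dq.map (Rat.castHom ℝ) * (Cq⁻¹).map (Rat.castHom ℝ) := by rw [hTC]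
        _ = (Dq * Cq⁻¹).map (Rat.castHom ℝ) := (Matrix.map_mul).symm
    intro i j
    exact ⟨(Dq * Cq⁻¹) i j, by rw [hTeq]; rfl⟩
  · intro h
    choose q hq using h
    set N : ℕ := (q 0 0).den * ((q 0 1).den * ((q 1 0).den * (q 1 1).den)) with hNdef
    have hNpos : 0 < N := by positivity
    have hNR : (N : ℝ) ≠ 0 := by exact_mod_cast hNpos.ne'
    have hdvd : ∀ i j : Fin 2, (q i j).den ∣ N := by
      intro i j
      fin_cases i <;> fin_cases j
      · exact ⟨_, rfl⟩
      · exact Dvd.dvd.mul_left (Dvd.intro _ rfl) _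
      · exact Dvd.dvd.mul_left (Dvd.dvd.mul_left (Dvd.intro _ rfl) _) _
      · exact Dvd.dvd.mul_left (Dvd.dvd.mul_left (Dvd.intro_left _ rfl) _) _
    have hm : ∀ i j : Fin 2, ∃ m : ℤ, ((N : ℚ)) * q i j = (m : ℚ) :=
      fun i j => den_dvd_int_mul _ _ (hdvd i j)
    choose m hmspec using hm
    have hmR : ∀ i j, ((m i j : ℤ) : ℝ) = (N : ℝ) * T i j := by
      intro i j
      have := congrArg (fun x : ℚ => (x : ℝ)) (hmspec i j)
      push_cast at this
      rw [← this, hq i j]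
    have hABT : A * T = B := Matrix.mul_nonsing_inv_cancel_left A B hA
    -- the two candidate lattice vectors
    have hmem : ∀ j : Fin 2, (fun i => (N : ℝ) * B i j) ∈ latt A ∩ latt B := by
      intro j
      constructor
      · refine ⟨fun k => m k j, ?_⟩
        funext i
        have : (N : ℝ) * B i j = (N : ℝ) * (A * T) i j := by rw [hABT]
        rw [this]
        simp only [Matrix.mulVec, dotProduct, Matrix.mul_apply, Fin.sum_univ_two, hmR]
        ring
      · refine ⟨fun k => (N : ℤ) * (if k = j then 1 else 0), ?_⟩
        funext i
        simp only [Matrix.mulVec, dotProduct, Fin.sum_univ_two]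
        fin_cases j <;> simp <;> ring
    refine ⟨fun i => (N : ℝ) * B i 0, hmem 0, fun i => (N : ℝ) * B i 1, hmem 1, ?_⟩
    have hW : ![fun i => (N : ℝ) * B i 0, fun i => (N : ℝ) * B i 1]
        = (fun j => ((N : ℝ) • B.transpose) j) := by
      funext j
      fin_cases j <;> funext i <;> simp [Matrix.transpose_apply]
    rw [hW]
    apply Matrix.linearIndependent_rows_iff_isUnit.mpr
    apply (Matrix.isUnit_iff_isUnit_det _).mpr
    rw [isUnit_iff_ne_zero]
    rw [Matrix.det_smul, Matrix.det_transpose]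
    have hBd : B.det ≠ 0 := hB.ne_zero
    positivity
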